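/- Let m1, m2, λ, c > 0 with m1 + m2 > λ, and γ1, γ2 ∈ [0,1]. Define m̄ = m1 + m2 − λ and α = c(γ1+γ2)/2 + 1/m̄ + sqrt(c²(γ1−γ2)²/4 + 1/m̄²). Then α > γ_i c for i = 1,2, and the rates λ_i* = m_i − 1/(α − γ_i c) satisfy λ1* + λ2* = λ and 1/(m1 − λ1*) + γ1 c = 1/(m2 − λ2*) + γ2 c = α (Wardrop equilibrium conditions). -/

import Mathlib

/-- Wardrop equilibrium for two CPs: with the stated `α`, the rates
`λᵢ* = mᵢ − 1/(α − γᵢ c)` sum to `λ` and equalize user costs at level `α`. -/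
theorem wardrop_equilibrium_two_CPs
    (m1 m2 lam c γ1 γ2 mbar α : ℝ)
    (hm1 : 0 < m1) (hm2 : 0 < m2) (hlam : 0 < lam) (hc : 0 < c)
    (hsum : m1 + m2 > lam)
    (hγ1 : γ1 ∈ Set.Icc (0:ℝ) 1) (hγ2 : γ2 ∈ Set.Icc (0:ℝ) 1)
    (hmbar : mbar = m1 + m2 - lam)
    (hα : α = c*(γ1+γ2)/2 + 1/mbar + Real.sqrt (c^2*(γ1-γ2)^2/4 + 1/mbar^2)) :
    α > γ1*c ∧ α > γ2*c ∧
    (m1 - 1/(α - γ1*c)) + (m2 - 1/(α - γ2*c)) = lam ∧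
    1/(m1 - (m1 - 1/(α - γ1*c))) + γ1*c = α ∧
    1/(m2 - (m2 - 1/(α - γ2*c))) + γ2*c = α := by
  have hmb : 0 < mbar := by rw [hmbar]; linarith
  set u : ℝ := 1/mbar with hu
  set d : ℝ := c*(γ1-γ2)/2 with hd
  set s : ℝ := Real.sqrt (c^2*(γ1-γ2)^2/4 + 1/mbar^2) with hs
  have hupos : 0 < u := by positivity
  have hsnn : 0 ≤ s := Real.sqrt_nonneg _
  have hs2 : s^2 = d^2 + u^2 := by
    rw [hs, Real.sq_sqrt (by positivity)]
    rw [hd, hu]; ring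
  have hds' : -s ≤ d ∧ d ≤ s := abs_le_of_sq_le_sq' (by rw [hs2]; nlinarith [sq_nonneg u]) hsnn
  have ha : α - γ1*c = u + s - d := by rw [hα, hd]; ring
  have hb : α - γ2*c = u + s + d := by rw [hα, hd]; ring
  have hapos : 0 < α - γ1*c := by rw [ha]; linarith [hds'.1]
  have hbpos : 0 < α - γ2*c := by rw [hb]; linarith [hds'.2]
  have humb : u * mbar = 1 := by rw [hu]; field_simp
  refine ⟨by linarith, by linarith, ?_, ?_, ?_⟩
  · have hane : α - γ1*c ≠ 0 := ne_of_gt hapos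
    have hbne : α - γ2*c ≠ 0 := ne_of_gt hbpos
    have key : (α - γ1*c) + (α - γ2*c) = mbar * ((α - γ1*c) * (α - γ2*c)) := by
      rw [ha, hb]; nlinarith [hs2, humb]
    have h1 : 1/(α - γ1*c) + 1/(α - γ2*c) = mbar := by
      rw [div_add_div _ _ hane hbne, div_eq_iff (mul_ne_zero hane hbne)]; linarith [key]
    linarith [h1, hmbar]
  · have hane : α - γ1*c ≠ 0 := ne_of_gt hapos
    field_simp
    ring
  · have hbne : α - γ2*c ≠ 0 := ne_of_gt hbpos
    field_simp
    ring
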